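/- Let G be a linearly ordered abelian group, let β₁,…,β_m ∈ G, let λ be a limit ordinal, and let (γ_s)_{s<λ} be a strictly increasing family in G with no last element. Let t₁,…,t_m be pairwise distinct integers. Then there exist an ordinal ν < λ and an index r with 1 ≤ r ≤ m such that for all i ≠ r and all s with ν < s < λ, one has β_i + t_i·γ_s > β_r + t_r·γ_s. -/

import Mathlib

private lemma key_step {G : Type*} [AddCommGroup G] [LinearOrder G] [IsOrderedAddMonoid G]
    (a b g g' : G) (ti tj : ℤ) (hg : g < g') (hk : tj < ti)
    (h0 : b + tj • g ≤ a + ti • g) : b + tj • g' < a + ti • g' := by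
  have h1 : (ti - tj) • g < (ti - tj) • g' :=
    zsmul_lt_zsmul_right (by omega) hg
  rw [sub_zsmul, sub_zsmul] at h1
  refine sub_neg.mp ?_
  have heq : b + tj • g' - (a + ti • g') =
      (b + tj • g - (a + ti • g)) + ((ti • g + -(tj • g)) - (ti • g' + -(tj • g'))) := by
    abel
  rw [heq]
  exact add_neg_of_nonpos_of_neg (sub_nonpos.mpr h0) (sub_neg.mpr h1)

private lemma pair_lemma {G : Type*} [AddCommGroup G] [LinearOrder G] [IsOrderedAddMonoid G]
    {m : ℕ} (β : Fin m → G) (lam : Ordinal) (hlam : Order.IsSuccLimit lam)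
    (γ : Ordinal → G)
    (hγ : ∀ s s' : Ordinal, s < s' → s' < lam → γ s < γ s')
    (t : Fin m → ℤ) (i j : Fin m) (hk : t j < t i) :
    ∃ ν, ν < lam ∧
      ((∀ s, ν < s → s < lam → β i + t i • γ s < β j + t j • γ s) ∨
       (∀ s, ν < s → s < lam → β j + t j • γ s < β i + t i • γ s)) := by
  by_cases h : ∃ s, s < lam ∧ β j + t j • γ s ≤ β i + t i • γ s
  · obtain ⟨ν, hν, hle⟩ := h
    exact ⟨ν, hν, Or.inr fun s hs hslam =>
      key_step _ _ _ _ _ _ (hγ ν s hs hslam) hk hle⟩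
  · push_neg at h
    exact ⟨0, hlam.pos, Or.inl fun s _ hslam => h s hslam⟩

/-- **Ostrowski's lemma, second statement.**
Among the functions `s ↦ β_i + t_i • γ_s` (with pairwise distinct integers `t_i`),
one index `r` is eventually strictly minimal: there are `ν < λ` and `r` such that
`β_i + t_i • γ_s > β_r + t_r • γ_s` for all `i ≠ r` and all `ν < s < λ`. -/
theorem ostrowski_min {G : Type*} [AddCommGroup G] [LinearOrder G] [IsOrderedAddMonoid G]
    (m : ℕ) (hm : 0 < m) (β : Fin m → G)
    (lam : Ordinal) (hlam : Order.IsSuccLimit lam)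
    (γ : Ordinal → G)
    (hγ : ∀ s s' : Ordinal, s < s' → s' < lam → γ s < γ s')
    (t : Fin m → ℤ) (ht : Function.Injective t) :
    ∃ ν : Ordinal, ν < lam ∧ ∃ r : Fin m, ∀ i : Fin m, i ≠ r →
      ∀ s : Ordinal, ν < s → s < lam →
        β r + t r • γ s < β i + t i • γ s := by
  have H : ∀ p : Fin m × Fin m, ∃ ν, ν < lam ∧ (p.1 ≠ p.2 →
      ((∀ s, ν < s → s < lam → β p.1 + t p.1 • γ s < β p.2 + t p.2 • γ s) ∨
       (∀ s, ν < s → s < lam → β p.2 + t p.2 • γ s < β p.1 + t p.1 • γ s))) := by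
    rintro ⟨i, j⟩
    by_cases hij : i = j
    · exact ⟨0, hlam.pos, fun h => absurd hij h⟩
    · have htij : t i ≠ t j := fun h => hij (ht h)
      rcases lt_or_gt_of_ne htij with h | h
      · obtain ⟨ν, hν, hd⟩ := pair_lemma β lam hlam γ hγ t j i h
        exact ⟨ν, hν, fun _ => hd.symm⟩
      · obtain ⟨ν, hν, hd⟩ := pair_lemma β lam hlam γ hγ t i j h
        exact ⟨ν, hν, fun _ => hd⟩
  choose ν hν hdisj using H
  set νs := Finset.univ.sup ν with hνs
  have hstar : νs < lam :=
    (Finset.sup_lt_iff hlam.pos).mpr fun p _ => hν p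
  set s0 := Order.succ νs with hs0def
  have hs0 : νs < s0 := Order.lt_succ νs
  have hs0lam : s0 < lam := hlam.succ_lt hstar
  obtain ⟨r, -, hr⟩ := Finset.exists_min_image Finset.univ
    (fun i => β i + t i • γ s0) ⟨⟨0, hm⟩, Finset.mem_univ _⟩
  refine ⟨νs, hstar, r, fun i hi s hs hslam => ?_⟩
  have hle : ν (r, i) ≤ νs := Finset.le_sup (Finset.mem_univ _)
  rcases hdisj (r, i) (by simpa using hi.symm) with h | h
  · exact h s (lt_of_le_of_lt hle hs) hslam
  · have h1 := h s0 (lt_of_le_of_lt hle hs0) hs0lam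
    have h2 := hr i (Finset.mem_univ _)
    simp only at h1 h2
    exact absurd h2 (not_le.mpr h1)
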